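/- Let G > 0 and ν ∈ ℝ with ν ≠ 1/2, set λ = 2Gν/(1−2ν) and E = 2G(1+ν), and let F, a, b, I be real constants with I ≠ 0, a > 0 and b > 0. Bishop's full cantilever displacement field u, with u_x = −(Fν/(EI))·x·y·z, u_y = (F/(EI))·[ (ν/2)(x² − y²)·z − z³/6 ], and u_z = (F/(EI))·[ (1/2)·y·(νx² + z²) + (ν/6)·y³ + (1+ν)·(b²y − y³/3) − (a²ν/3)·y − (4a³ν/π³)·Σ_{n=1}^{∞} ((−1)ⁿ/n³)·cos(nπx/a)·sinh(nπy/a)/cosh(nπb/a) ], satisfies the homogeneous Navier–Cauchy equations G·Δu + (λ+G)·∇(div u) = 0 at every point of the domain ℝ × (−b, b) × ℝ. -/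

import Mathlib

/-- Partial derivative of `f(x,y,z)` with respect to the first variable. -/
noncomputable def pd1 (f : ℝ → ℝ → ℝ → ℝ) : ℝ → ℝ → ℝ → ℝ :=
  fun x y z => deriv (fun t => f t y z) x

/-- Partial derivative of `f(x,y,z)` with respect to the second variable. -/
noncomputable def pd2 (f : ℝ → ℝ → ℝ → ℝ) : ℝ → ℝ → ℝ → ℝ :=
  fun x y z => deriv (fun t => f x t z) y

/-- Partial derivative of `f(x,y,z)` with respect to the third variable. -/
noncomputable def pd3 (f : ℝ → ℝ → ℝ → ℝ) : ℝ → ℝ → ℝ → ℝ :=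
  fun x y z => deriv (fun t => f x y t) z

/-- Laplacian `Δf = f_{,xx} + f_{,yy} + f_{,zz}` of a scalar field on `ℝ³`. -/
noncomputable def lap3 (f : ℝ → ℝ → ℝ → ℝ) : ℝ → ℝ → ℝ → ℝ :=
  fun x y z => pd1 (pd1 f) x y z + pd2 (pd2 f) x y z + pd3 (pd3 f) x y z

/-- Divergence `div u = ∂_x u_x + ∂_y u_y + ∂_z u_z` of a vector field on `ℝ³`. -/
noncomputable def div3 (ux uy uz : ℝ → ℝ → ℝ → ℝ) : ℝ → ℝ → ℝ → ℝ :=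
  fun x y z => pd1 ux x y z + pd2 uy x y z + pd3 uz x y z

open Real

section BishopAux

noncomputable def kk (a : ℝ) (n : ℕ) : ℝ := ((n : ℝ) + 1) * (π / a)

noncomputable def bt (a b : ℝ) (n : ℕ) (x y : ℝ) : ℝ :=
  (-1 : ℝ) ^ (n + 1) / ((n : ℝ) + 1) ^ 3 *
    (Real.cos (kk a n * x) * Real.sinh (kk a n * y) / Real.cosh (kk a n * b))

noncomputable def btX (a b : ℝ) (n : ℕ) (x y : ℝ) : ℝ :=
  (-1 : ℝ) ^ (n + 1) / ((n : ℝ) + 1) ^ 3 *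
    (-(kk a n * Real.sin (kk a n * x)) * Real.sinh (kk a n * y) / Real.cosh (kk a n * b))

noncomputable def btY (a b : ℝ) (n : ℕ) (x y : ℝ) : ℝ :=
  (-1 : ℝ) ^ (n + 1) / ((n : ℝ) + 1) ^ 3 *
    (Real.cos (kk a n * x) * (kk a n * Real.cosh (kk a n * y)) / Real.cosh (kk a n * b))

noncomputable def btYY (a b : ℝ) (n : ℕ) (x y : ℝ) : ℝ :=
  (-1 : ℝ) ^ (n + 1) / ((n : ℝ) + 1) ^ 3 *
    (kk a n ^ 2 * (Real.cos (kk a n * x) * Real.sinh (kk a n * y) / Real.cosh (kk a n * b)))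

lemma kk_pos {a : ℝ} (ha : 0 < a) (n : ℕ) : 0 < kk a n := by
  unfold kk
  have := Real.pi_pos
  positivity

lemma bt_hasDerivAt_x (a b : ℝ) (n : ℕ) (y x : ℝ) :
    HasDerivAt (fun t => bt a b n t y) (btX a b n x y) x := by
  unfold bt btX
  have h : HasDerivAt (fun t : ℝ => kk a n * t) (kk a n * 1) x :=
    (hasDerivAt_id x).const_mul (kk a n)
  have h2 := (((h.cos).mul_const (Real.sinh (kk a n * y))).div_const
      (Real.cosh (kk a n * b))).const_mul ((-1 : ℝ) ^ (n + 1) / ((n : ℝ) + 1) ^ 3)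
  refine h2.congr_deriv ?_
  ring

lemma btX_hasDerivAt_x (a b : ℝ) (n : ℕ) (y x : ℝ) :
    HasDerivAt (fun t => btX a b n t y) (-(btYY a b n x y)) x := by
  unfold btX btYY
  have h : HasDerivAt (fun t : ℝ => kk a n * t) (kk a n * 1) x :=
    (hasDerivAt_id x).const_mul (kk a n)
  have h2 := (((((h.sin).const_mul (kk a n)).neg).mul_const
      (Real.sinh (kk a n * y))).div_const (Real.cosh (kk a n * b))).const_mul
      ((-1 : ℝ) ^ (n + 1) / ((n : ℝ) + 1) ^ 3)
  refine h2.congr_deriv ?_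
  ring

lemma bt_hasDerivAt_y (a b : ℝ) (n : ℕ) (x y : ℝ) :
    HasDerivAt (fun t => bt a b n x t) (btY a b n x y) y := by
  unfold bt btY
  have h : HasDerivAt (fun t : ℝ => kk a n * t) (kk a n * 1) y :=
    (hasDerivAt_id y).const_mul (kk a n)
  have h2 := (((h.sinh).const_mul (Real.cos (kk a n * x))).div_const
      (Real.cosh (kk a n * b))).const_mul ((-1 : ℝ) ^ (n + 1) / ((n : ℝ) + 1) ^ 3)
  refine h2.congr_deriv ?_
  ring

lemma btY_hasDerivAt_y (a b : ℝ) (n : ℕ) (x y : ℝ) :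
    HasDerivAt (fun t => btY a b n x t) (btYY a b n x y) y := by
  unfold btY btYY
  have h : HasDerivAt (fun t : ℝ => kk a n * t) (kk a n * 1) y :=
    (hasDerivAt_id y).const_mul (kk a n)
  have h2 := ((((h.cosh).const_mul (kk a n)).const_mul (Real.cos (kk a n * x))).div_const
      (Real.cosh (kk a n * b))).const_mul ((-1 : ℝ) ^ (n + 1) / ((n : ℝ) + 1) ^ 3)
  refine h2.congr_deriv ?_
  ring

lemma summable_aux {r : ℝ} (h0 : 0 ≤ r) (h1 : r < 1) (C : ℝ) :
    Summable (fun n : ℕ => C * (((n : ℝ) + 1) ^ 2 * r ^ (n + 1))) := by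
  apply Summable.mul_left
  have h : Summable (fun n : ℕ => ((n : ℝ)) ^ 2 * r ^ n) :=
    summable_pow_mul_geometric_of_norm_lt_one 2
      (by rwa [Real.norm_eq_abs, abs_of_nonneg h0])
  have h2 := h.comp_injective (Nat.succ_injective)
  refine h2.congr fun n => ?_
  push_cast [Function.comp, Nat.succ_eq_add_one]
  ring_nf

lemma cosh_ratio_bound {k b δ : ℝ} (hk : 0 < k) {t : ℝ} (ht : |t| ≤ b - δ) :
    Real.cosh (k * t) / Real.cosh (k * b) ≤ 2 * Real.exp (-(k * δ)) := by
  have hbδ : 0 ≤ b - δ := le_trans (abs_nonneg t) ht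
  have h1 : Real.cosh (k * t) ≤ Real.cosh (k * (b - δ)) := by
    rw [Real.cosh_le_cosh, abs_mul, abs_mul, abs_of_pos hk, abs_of_nonneg hbδ]
    exact mul_le_mul_of_nonneg_left ht hk.le
  have h2 : Real.cosh (k * (b - δ)) ≤ Real.exp (k * (b - δ)) := by
    rw [Real.cosh_eq]
    have h3 : Real.exp (-(k * (b - δ))) ≤ Real.exp (k * (b - δ)) := by
      apply Real.exp_le_exp.mpr
      nlinarith [mul_nonneg hk.le hbδ]
    linarith
  have h4 : Real.exp (k * b) / 2 ≤ Real.cosh (k * b) := by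
    rw [Real.cosh_eq]
    have := (Real.exp_pos (-(k * b))).le
    linarith
  calc Real.cosh (k * t) / Real.cosh (k * b)
      ≤ Real.exp (k * (b - δ)) / (Real.exp (k * b) / 2) := by
        apply div_le_div₀ (Real.exp_pos _).le (h1.trans h2) (by positivity) h4
    _ = 2 * Real.exp (-(k * δ)) := by
        have he : Real.exp (k * (b - δ)) = Real.exp (-(k * δ)) * Real.exp (k * b) := by
          rw [← Real.exp_add]; ring_nf
        rw [he]
        field_simp

lemma master_bound {a b δ : ℝ} (ha : 0 < a) (hδ : 0 < δ) (n j : ℕ) (hj : j ≤ 2)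
    {t T : ℝ} (ht : |t| ≤ b - δ) (hT : |T| ≤ kk a n ^ j * Real.cosh (kk a n * t)) :
    |(-1 : ℝ) ^ (n + 1) / ((n : ℝ) + 1) ^ 3 * (T / Real.cosh (kk a n * b))| ≤
      2 * (1 + π / a) ^ 2 * (((n : ℝ) + 1) ^ 2 * Real.exp (-(π / a * δ)) ^ (n + 1)) := by
  have hd : 0 < π / a := div_pos Real.pi_pos ha
  have hk : 0 < kk a n := kk_pos ha n
  have hn0 : (0 : ℝ) ≤ (n : ℝ) := Nat.cast_nonneg n
  have hN : (1 : ℝ) ≤ (n : ℝ) + 1 := by linarith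
  have hcb : 0 < Real.cosh (kk a n * b) := Real.cosh_pos _
  have habs : |(-1 : ℝ) ^ (n + 1) / ((n : ℝ) + 1) ^ 3| = 1 / ((n : ℝ) + 1) ^ 3 := by
    rw [abs_div, abs_pow, abs_neg, abs_one, one_pow, abs_pow,
      abs_of_nonneg (by linarith : (0 : ℝ) ≤ (n : ℝ) + 1)]
  have hratio := cosh_ratio_bound hk (δ := δ) (b := b) ht
  have hexp : Real.exp (-(kk a n * δ)) = Real.exp (-(π / a * δ)) ^ (n + 1) := by
    rw [← Real.exp_nat_mul]
    congr 1
    unfold kk; push_cast; ring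
  rw [abs_mul, habs, abs_div, abs_of_pos hcb]
  calc 1 / ((n : ℝ) + 1) ^ 3 * (|T| / Real.cosh (kk a n * b))
      ≤ 1 / ((n : ℝ) + 1) ^ 3 *
        (kk a n ^ j * Real.cosh (kk a n * t) / Real.cosh (kk a n * b)) := by
        gcongr
    _ ≤ 1 / ((n : ℝ) + 1) ^ 3 * (kk a n ^ j * (2 * Real.exp (-(kk a n * δ)))) := by
        apply mul_le_mul_of_nonneg_left _ (by positivity)
        rw [mul_div_assoc]
        exact mul_le_mul_of_nonneg_left hratio (by positivity)
    _ ≤ 2 * (1 + π / a) ^ 2 * (((n : ℝ) + 1) ^ 2 * Real.exp (-(π / a * δ)) ^ (n + 1)) := by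
        rw [hexp]
        set N := (n : ℝ) + 1 with hNdef
        set R := Real.exp (-(π / a * δ)) ^ (n + 1) with hRdef
        have hR : (0 : ℝ) ≤ R := by positivity
        have hkk : kk a n = N * (π / a) := rfl
        rw [hkk, div_mul_eq_mul_div, one_mul, div_le_iff₀ (by positivity : (0 : ℝ) < N ^ 3)]
        have h1 : (π / a) ^ j ≤ (1 + π / a) ^ 2 := by
          interval_cases j <;> nlinarith
        have h2 : N ^ j ≤ N ^ 5 := pow_le_pow_right₀ hN (by omega)
        have key : (N * (π / a)) ^ j * (2 * R) ≤ (1 + π / a) ^ 2 * N ^ 5 * (2 * R) := by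
          rw [mul_pow]
          apply mul_le_mul_of_nonneg_right _ (by positivity)
          calc N ^ j * (π / a) ^ j ≤ N ^ 5 * (1 + π / a) ^ 2 :=
                mul_le_mul h2 h1 (by positivity) (by positivity)
            _ = (1 + π / a) ^ 2 * N ^ 5 := by ring
        calc (N * (π / a)) ^ j * (2 * R) ≤ (1 + π / a) ^ 2 * N ^ 5 * (2 * R) := key
          _ = 2 * (1 + π / a) ^ 2 * (N ^ 2 * R) * N ^ 3 := by ring

lemma abs_sinh_le_cosh (u : ℝ) : |Real.sinh u| ≤ Real.cosh u := by
  rw [Real.abs_sinh, ← Real.cosh_abs]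
  rw [Real.sinh_eq, Real.cosh_eq]
  have := (Real.exp_pos (-|u|)).le
  linarith

noncomputable def BND (a δ : ℝ) (n : ℕ) : ℝ :=
  2 * (1 + π / a) ^ 2 * (((n : ℝ) + 1) ^ 2 * Real.exp (-(π / a * δ)) ^ (n + 1))

lemma summable_BND {a δ : ℝ} (ha : 0 < a) (hδ : 0 < δ) : Summable (BND a δ) := by
  unfold BND
  apply summable_aux (Real.exp_pos _).le
  rw [Real.exp_lt_one_iff]
  have hd : 0 < π / a := div_pos Real.pi_pos ha
  nlinarith

lemma bt_bound {a b δ : ℝ} (ha : 0 < a) (hδ : 0 < δ) (n : ℕ) (x : ℝ) {t : ℝ}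
    (ht : |t| ≤ b - δ) : ‖bt a b n x t‖ ≤ BND a δ n := by
  rw [Real.norm_eq_abs]
  unfold bt BND
  apply master_bound ha hδ n 0 (by omega) ht
  rw [pow_zero, one_mul, abs_mul]
  calc |Real.cos (kk a n * x)| * |Real.sinh (kk a n * t)|
      ≤ 1 * Real.cosh (kk a n * t) :=
        mul_le_mul (Real.abs_cos_le_one _) (abs_sinh_le_cosh _) (abs_nonneg _) zero_le_one
    _ = Real.cosh (kk a n * t) := one_mul _

lemma btX_bound {a b δ : ℝ} (ha : 0 < a) (hδ : 0 < δ) (n : ℕ) (x : ℝ) {t : ℝ}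
    (ht : |t| ≤ b - δ) : ‖btX a b n x t‖ ≤ BND a δ n := by
  rw [Real.norm_eq_abs]
  unfold btX BND
  apply master_bound ha hδ n 1 (by omega) ht
  rw [pow_one, abs_mul, abs_neg, abs_mul, abs_of_pos (kk_pos ha n)]
  have h1 : |Real.sin (kk a n * x)| ≤ 1 := Real.abs_sin_le_one _
  have h2 := abs_sinh_le_cosh (kk a n * t)
  have hk := (kk_pos ha n).le
  have hc := (Real.cosh_pos (kk a n * t)).le
  nlinarith [mul_le_mul_of_nonneg_left
    (mul_le_mul h1 h2 (abs_nonneg _) zero_le_one) hk]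

lemma btY_bound {a b δ : ℝ} (ha : 0 < a) (hδ : 0 < δ) (n : ℕ) (x : ℝ) {t : ℝ}
    (ht : |t| ≤ b - δ) : ‖btY a b n x t‖ ≤ BND a δ n := by
  rw [Real.norm_eq_abs]
  unfold btY BND
  apply master_bound ha hδ n 1 (by omega) ht
  rw [pow_one, abs_mul, abs_mul, abs_of_pos (kk_pos ha n),
    abs_of_pos (Real.cosh_pos _)]
  have h1 : |Real.cos (kk a n * x)| ≤ 1 := Real.abs_cos_le_one _
  have hk := (kk_pos ha n).le
  have hc := (Real.cosh_pos (kk a n * t)).le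
  nlinarith [mul_le_mul_of_nonneg_right h1 (mul_nonneg hk hc)]

lemma btYY_bound {a b δ : ℝ} (ha : 0 < a) (hδ : 0 < δ) (n : ℕ) (x : ℝ) {t : ℝ}
    (ht : |t| ≤ b - δ) : ‖btYY a b n x t‖ ≤ BND a δ n := by
  rw [Real.norm_eq_abs]
  rw [show btYY a b n x t = (-1 : ℝ) ^ (n + 1) / ((n : ℝ) + 1) ^ 3 *
    (kk a n ^ 2 * (Real.cos (kk a n * x) * Real.sinh (kk a n * t)) /
      Real.cosh (kk a n * b)) from by unfold btYY; ring]
  unfold BND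
  apply master_bound ha hδ n 2 (by omega) ht
  rw [abs_mul, abs_pow, abs_of_pos (kk_pos ha n), abs_mul]
  have h1 : |Real.cos (kk a n * x)| ≤ 1 := Real.abs_cos_le_one _
  have h2 := abs_sinh_le_cosh (kk a n * t)
  have hk := (kk_pos ha n).le
  have hc := (Real.cosh_pos (kk a n * t)).le
  nlinarith [mul_le_mul_of_nonneg_left
    (mul_le_mul h1 h2 (abs_nonneg _) zero_le_one) (pow_nonneg hk 2)]

lemma hasDerivAt_S_x {a b y : ℝ} (ha : 0 < a) (hy : |y| < b) (x : ℝ) :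
    HasDerivAt (fun t => ∑' n, bt a b n t y) (∑' n, btX a b n x y) x := by
  have hδ : 0 < b - |y| := by linarith
  have hty : |y| ≤ b - (b - |y|) := by linarith
  exact hasDerivAt_tsum (summable_BND ha hδ) (fun n t => bt_hasDerivAt_x a b n y t)
    (fun n t => btX_bound ha hδ n t hty)
    (Summable.of_norm_bounded (summable_BND ha hδ) fun n => bt_bound ha hδ n 0 hty) x

lemma hasDerivAt_S_xx {a b y : ℝ} (ha : 0 < a) (hy : |y| < b) (x : ℝ) :
    HasDerivAt (fun t => ∑' n, btX a b n t y) (∑' n, -(btYY a b n x y)) x := by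
  have hδ : 0 < b - |y| := by linarith
  have hty : |y| ≤ b - (b - |y|) := by linarith
  exact hasDerivAt_tsum (summable_BND ha hδ) (fun n t => btX_hasDerivAt_x a b n y t)
    (fun n t => by rw [norm_neg]; exact btYY_bound ha hδ n t hty)
    (Summable.of_norm_bounded (summable_BND ha hδ) fun n => btX_bound ha hδ n 0 hty) x

lemma hasDerivAt_S_y {a b x y : ℝ} (ha : 0 < a) (hy : |y| < b) :
    HasDerivAt (fun t => ∑' n, bt a b n x t) (∑' n, btY a b n x y) y := by
  have hδ : 0 < (b - |y|) / 2 := by linarith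
  have hmem : y ∈ Set.Ioo (-((|y| + b) / 2)) ((|y| + b) / 2) := by
    constructor <;> [nlinarith [abs_nonneg y, neg_abs_le y]; nlinarith [le_abs_self y]]
  refine hasDerivAt_tsum_of_isPreconnected (summable_BND ha hδ) isOpen_Ioo
    isPreconnected_Ioo (fun n t _ => bt_hasDerivAt_y a b n x t)
    (fun n t htm => btY_bound ha hδ n x ?_) hmem
    (Summable.of_norm_bounded (summable_BND ha hδ) fun n =>
      bt_bound ha hδ n x (by rw [abs_le]; constructor <;> nlinarith [le_abs_self y, neg_abs_le y]))
    hmem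
  obtain ⟨h1, h2⟩ := htm
  rw [abs_le]
  constructor <;> nlinarith [abs_nonneg y]

lemma hasDerivAt_SY_y {a b x y : ℝ} (ha : 0 < a) (hy : |y| < b) :
    HasDerivAt (fun t => ∑' n, btY a b n x t) (∑' n, btYY a b n x y) y := by
  have hδ : 0 < (b - |y|) / 2 := by linarith
  have hmem : y ∈ Set.Ioo (-((|y| + b) / 2)) ((|y| + b) / 2) := by
    constructor <;> [nlinarith [abs_nonneg y, neg_abs_le y]; nlinarith [le_abs_self y]]
  refine hasDerivAt_tsum_of_isPreconnected (summable_BND ha hδ) isOpen_Ioo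
    isPreconnected_Ioo (fun n t _ => btY_hasDerivAt_y a b n x t)
    (fun n t htm => btYY_bound ha hδ n x ?_) hmem
    (Summable.of_norm_bounded (summable_BND ha hδ) fun n =>
      btY_bound ha hδ n x (by rw [abs_le]; constructor <;> nlinarith [le_abs_self y, neg_abs_le y]))
    hmem
  obtain ⟨h1, h2⟩ := htm
  rw [abs_le]
  constructor <;> nlinarith [abs_nonneg y]

end BishopAux

/-- Bishop's full cantilever displacement field — including the harmonic series
term in the axial component `u_z` — satisfies the homogeneous Navier–Cauchy
equations `G·Δu + (λ+G)·∇(div u) = 0` at every point of the domain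
`ℝ × (−b,b) × ℝ`, where `λ = 2Gν/(1−2ν)` and `E = 2G(1+ν)`. -/
theorem bishop_full_navier_cauchy (G ν F I a b : ℝ)
    (hG : 0 < G) (hν : ν ≠ 1 / 2) (hI : I ≠ 0) (ha : 0 < a) (hb : 0 < b) :
    let lam := 2 * G * ν / (1 - 2 * ν)
    let E := 2 * G * (1 + ν)
    let ux : ℝ → ℝ → ℝ → ℝ := fun x y z => -(F * ν / (E * I)) * x * y * z
    let uy : ℝ → ℝ → ℝ → ℝ := fun x y z =>
      F / (E * I) * (ν / 2 * (x ^ 2 - y ^ 2) * z - z ^ 3 / 6)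
    let uz : ℝ → ℝ → ℝ → ℝ := fun x y z =>
      F / (E * I) * (1 / 2 * y * (ν * x ^ 2 + z ^ 2) + ν / 6 * y ^ 3 +
        (1 + ν) * (b ^ 2 * y - y ^ 3 / 3) - a ^ 2 * ν / 3 * y -
        4 * a ^ 3 * ν / π ^ 3 *
          ∑' n : ℕ, (-1 : ℝ) ^ (n + 1) / ((n : ℝ) + 1) ^ 3 *
            (Real.cos ((n + 1) * π * x / a) * Real.sinh ((n + 1) * π * y / a) /
              Real.cosh ((n + 1) * π * b / a)))
    ∀ x y z : ℝ, y ∈ Set.Ioo (-b) b →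
      G * lap3 ux x y z + (lam + G) * pd1 (div3 ux uy uz) x y z = 0 ∧
      G * lap3 uy x y z + (lam + G) * pd2 (div3 ux uy uz) x y z = 0 ∧
      G * lap3 uz x y z + (lam + G) * pd3 (div3 ux uy uz) x y z = 0 := by
  intro lam E ux uy uz x y z hy
  obtain ⟨hy1, hy2⟩ := hy
  have hyabs : |y| < b := abs_lt.mpr ⟨hy1, hy2⟩
  have h12 : (1 : ℝ) - 2 * ν ≠ 0 := fun h => hν (by linarith)
  have hlam : lam = 2 * G * ν / (1 - 2 * ν) := rfl
  have hlamG : (lam + G) * (1 - 2 * ν) = G := by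
    rw [hlam]; field_simp; ring
  set SS : ℝ → ℝ → ℝ := fun X Y => ∑' n, bt a b n X Y with hSS
  -- rewrite uz in terms of SS
  have huz : uz = (fun X Y Z => F / (E * I) * (1 / 2 * Y * (ν * X ^ 2 + Z ^ 2) +
      ν / 6 * Y ^ 3 + (1 + ν) * (b ^ 2 * Y - Y ^ 3 / 3) - a ^ 2 * ν / 3 * Y -
      4 * a ^ 3 * ν / π ^ 3 * SS X Y)) := by
    funext X Y Z
    have hts : (∑' n : ℕ, (-1 : ℝ) ^ (n + 1) / ((n : ℝ) + 1) ^ 3 *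
        (Real.cos ((n + 1) * π * X / a) * Real.sinh ((n + 1) * π * Y / a) /
          Real.cosh ((n + 1) * π * b / a))) = SS X Y := by
      apply tsum_congr
      intro n
      show _ = bt a b n X Y
      unfold bt kk
      rw [show ((n : ℝ) + 1) * π * X / a = ((n : ℝ) + 1) * (π / a) * X from by ring,
        show ((n : ℝ) + 1) * π * Y / a = ((n : ℝ) + 1) * (π / a) * Y from by ring,
        show ((n : ℝ) + 1) * π * b / a = ((n : ℝ) + 1) * (π / a) * b from by ring]
    show uz X Y Z = F / (E * I) * (1 / 2 * Y * (ν * X ^ 2 + Z ^ 2) +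
      ν / 6 * Y ^ 3 + (1 + ν) * (b ^ 2 * Y - Y ^ 3 / 3) - a ^ 2 * ν / 3 * Y -
      4 * a ^ 3 * ν / π ^ 3 * SS X Y)
    rw [← hts]
  -- series derivative facts
  have hDX : ∀ X : ℝ, HasDerivAt (fun t => SS t y) (∑' n, btX a b n X y) X :=
    fun X => hasDerivAt_S_x ha hyabs X
  have hDXX : ∀ X : ℝ, HasDerivAt (fun t => ∑' n, btX a b n t y)
      (∑' n, -(btYY a b n X y)) X := fun X => hasDerivAt_S_xx ha hyabs X
  have hDY : ∀ t : ℝ, |t| < b → HasDerivAt (fun w => SS x w) (∑' n, btY a b n x t) t :=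
    fun t ht => hasDerivAt_S_y ha ht
  have hDYY : HasDerivAt (fun w => ∑' n, btY a b n x w) (∑' n, btYY a b n x y) y :=
    hasDerivAt_SY_y ha hyabs
  ----------------------------------------------------------------
  -- derivatives of ux
  have hpd1ux : ∀ X Y Z : ℝ, pd1 ux X Y Z = -(F * ν / (E * I)) * Y * Z := by
    intro X Y Z
    have h : HasDerivAt (fun t : ℝ => -(F * ν / (E * I)) * t * Y * Z)
        (-(F * ν / (E * I)) * Y * Z) X := by
      have h0 := (((hasDerivAt_id X).const_mul (-(F * ν / (E * I)))).mul_const Y).mul_const Z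
      refine h0.congr_deriv ?_; ring
    exact h.deriv
  have hpd2ux : ∀ X Y Z : ℝ, pd2 ux X Y Z = -(F * ν / (E * I)) * X * Z := by
    intro X Y Z
    have h : HasDerivAt (fun t : ℝ => -(F * ν / (E * I)) * X * t * Z)
        (-(F * ν / (E * I)) * X * Z) Y := by
      have h0 := ((hasDerivAt_id Y).const_mul (-(F * ν / (E * I)) * X)).mul_const Z
      refine h0.congr_deriv ?_; ring
    exact h.deriv
  have hpd3ux : ∀ X Y Z : ℝ, pd3 ux X Y Z = -(F * ν / (E * I)) * X * Y := by
    intro X Y Z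
    have h : HasDerivAt (fun t : ℝ => -(F * ν / (E * I)) * X * Y * t)
        (-(F * ν / (E * I)) * X * Y) Z := by
      have h0 := (hasDerivAt_id Z).const_mul (-(F * ν / (E * I)) * X * Y)
      refine h0.congr_deriv ?_; ring
    exact h.deriv
  have e_lapux : lap3 ux x y z = 0 := by
    show pd1 (pd1 ux) x y z + pd2 (pd2 ux) x y z + pd3 (pd3 ux) x y z = 0
    have e1 : pd1 (pd1 ux) x y z = 0 := by
      show deriv (fun t => pd1 ux t y z) x = 0
      rw [funext fun t => hpd1ux t y z, deriv_const]
    have e2 : pd2 (pd2 ux) x y z = 0 := by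
      show deriv (fun t => pd2 ux x t z) y = 0
      rw [funext fun t => hpd2ux x t z, deriv_const]
    have e3 : pd3 (pd3 ux) x y z = 0 := by
      show deriv (fun t => pd3 ux x y t) z = 0
      rw [funext fun t => hpd3ux x y t, deriv_const]
    rw [e1, e2, e3]; ring
  ----------------------------------------------------------------
  -- derivatives of uy
  have hpd1uy : ∀ X Y Z : ℝ, pd1 uy X Y Z = F / (E * I) * (ν * X * Z) := by
    intro X Y Z
    have h : HasDerivAt (fun t : ℝ => F / (E * I) * (ν / 2 * (t ^ 2 - Y ^ 2) * Z - Z ^ 3 / 6))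
        (F / (E * I) * (ν * X * Z)) X := by
      have h0 := (((((hasDerivAt_pow 2 X).sub_const (Y ^ 2)).const_mul
        (ν / 2)).mul_const Z).sub_const (Z ^ 3 / 6)).const_mul (F / (E * I))
      refine h0.congr_deriv ?_; push_cast; ring
    exact h.deriv
  have hpd2uy : ∀ X Y Z : ℝ, pd2 uy X Y Z = F / (E * I) * (-ν * Y * Z) := by
    intro X Y Z
    have h : HasDerivAt (fun t : ℝ => F / (E * I) * (ν / 2 * (X ^ 2 - t ^ 2) * Z - Z ^ 3 / 6))
        (F / (E * I) * (-ν * Y * Z)) Y := by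
      have h0 := (((((hasDerivAt_pow 2 Y).const_sub (X ^ 2)).const_mul
        (ν / 2)).mul_const Z).sub_const (Z ^ 3 / 6)).const_mul (F / (E * I))
      refine h0.congr_deriv ?_; push_cast; ring
    exact h.deriv
  have hpd3uy : ∀ X Y Z : ℝ, pd3 uy X Y Z =
      F / (E * I) * (ν / 2 * (X ^ 2 - Y ^ 2) - Z ^ 2 / 2) := by
    intro X Y Z
    have h : HasDerivAt (fun t : ℝ => F / (E * I) * (ν / 2 * (X ^ 2 - Y ^ 2) * t - t ^ 3 / 6))
        (F / (E * I) * (ν / 2 * (X ^ 2 - Y ^ 2) - Z ^ 2 / 2)) Z := by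
      have h0 := (((hasDerivAt_id Z).const_mul (ν / 2 * (X ^ 2 - Y ^ 2))).sub
        ((hasDerivAt_pow 3 Z).div_const 6)).const_mul (F / (E * I))
      refine h0.congr_deriv ?_; push_cast; ring
    exact h.deriv
  have e_lapuy : lap3 uy x y z = -(F / (E * I)) * z := by
    show pd1 (pd1 uy) x y z + pd2 (pd2 uy) x y z + pd3 (pd3 uy) x y z = _
    have e1 : pd1 (pd1 uy) x y z = F / (E * I) * (ν * z) := by
      show deriv (fun t => pd1 uy t y z) x = _
      rw [funext fun t => hpd1uy t y z]
      have h : HasDerivAt (fun t : ℝ => F / (E * I) * (ν * t * z))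
          (F / (E * I) * (ν * z)) x := by
        have h0 := (((hasDerivAt_id x).const_mul ν).mul_const z).const_mul (F / (E * I))
        refine h0.congr_deriv ?_; ring
      exact h.deriv
    have e2 : pd2 (pd2 uy) x y z = F / (E * I) * (-ν * z) := by
      show deriv (fun t => pd2 uy x t z) y = _
      rw [funext fun t => hpd2uy x t z]
      have h : HasDerivAt (fun t : ℝ => F / (E * I) * (-ν * t * z))
          (F / (E * I) * (-ν * z)) y := by
        have h0 := (((hasDerivAt_id y).const_mul (-ν)).mul_const z).const_mul (F / (E * I))
        refine h0.congr_deriv ?_; ring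
      exact h.deriv
    have e3 : pd3 (pd3 uy) x y z = F / (E * I) * (-z) := by
      show deriv (fun t => pd3 uy x y t) z = _
      rw [funext fun t => hpd3uy x y t]
      have h : HasDerivAt (fun t : ℝ => F / (E * I) * (ν / 2 * (x ^ 2 - y ^ 2) - t ^ 2 / 2))
          (F / (E * I) * (-z)) z := by
        have h0 := (((hasDerivAt_pow 2 z).div_const 2).const_sub
          (ν / 2 * (x ^ 2 - y ^ 2))).const_mul (F / (E * I))
        refine h0.congr_deriv ?_; push_cast; ring
      exact h.deriv
    rw [e1, e2, e3]; ring
  ----------------------------------------------------------------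
  -- derivatives of uz
  have hpd3uz : ∀ X Y Z : ℝ, pd3 uz X Y Z = F / (E * I) * (Y * Z) := by
    intro X Y Z
    rw [huz]
    have h : HasDerivAt (fun t : ℝ => F / (E * I) * (1 / 2 * Y * (ν * X ^ 2 + t ^ 2) +
        ν / 6 * Y ^ 3 + (1 + ν) * (b ^ 2 * Y - Y ^ 3 / 3) - a ^ 2 * ν / 3 * Y -
        4 * a ^ 3 * ν / π ^ 3 * SS X Y)) (F / (E * I) * (Y * Z)) Z := by
      have h0 := ((((((hasDerivAt_pow 2 Z).const_add (ν * X ^ 2)).const_mul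
        (1 / 2 * Y)).add_const (ν / 6 * Y ^ 3)).add_const
        ((1 + ν) * (b ^ 2 * Y - Y ^ 3 / 3))).sub_const
        (a ^ 2 * ν / 3 * Y)).sub_const (4 * a ^ 3 * ν / π ^ 3 * SS X Y) |>.const_mul
        (F / (E * I))
      refine h0.congr_deriv ?_; push_cast; ring
    exact h.deriv
  have hpd1uz : ∀ X Z : ℝ, pd1 uz X y Z = F / (E * I) * (ν * X * y) -
      F / (E * I) * (4 * a ^ 3 * ν / π ^ 3) * (∑' n, btX a b n X y) := by
    intro X Z
    rw [huz]
    have hpoly : HasDerivAt (fun t : ℝ => 1 / 2 * y * (ν * t ^ 2 + Z ^ 2) +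
        ν / 6 * y ^ 3 + (1 + ν) * (b ^ 2 * y - y ^ 3 / 3) - a ^ 2 * ν / 3 * y)
        (1 / 2 * y * (ν * ((2 : ℕ) * X ^ (2 - 1)))) X :=
      ((((((hasDerivAt_pow 2 X).const_mul ν).add_const (Z ^ 2)).const_mul
        (1 / 2 * y)).add_const (ν / 6 * y ^ 3)).add_const
        ((1 + ν) * (b ^ 2 * y - y ^ 3 / 3))).sub_const (a ^ 2 * ν / 3 * y)
    have hser := (hDX X).const_mul (4 * a ^ 3 * ν / π ^ 3)
    have h := (hpoly.sub hser).const_mul (F / (E * I))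
    have h2 : HasDerivAt (fun t : ℝ => F / (E * I) * (1 / 2 * y * (ν * t ^ 2 + Z ^ 2) +
        ν / 6 * y ^ 3 + (1 + ν) * (b ^ 2 * y - y ^ 3 / 3) - a ^ 2 * ν / 3 * y -
        4 * a ^ 3 * ν / π ^ 3 * SS t y))
        (F / (E * I) * (ν * X * y) -
          F / (E * I) * (4 * a ^ 3 * ν / π ^ 3) * (∑' n, btX a b n X y)) X := by
      refine h.congr_deriv ?_; push_cast; ring
    exact h2.deriv
  have hpd2uz : ∀ t : ℝ, |t| < b → pd2 uz x t z =
      F / (E * I) * (1 / 2 * (ν * x ^ 2 + z ^ 2) + ν / 2 * t ^ 2 +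
        (1 + ν) * (b ^ 2 - t ^ 2) - a ^ 2 * ν / 3) -
      F / (E * I) * (4 * a ^ 3 * ν / π ^ 3) * (∑' n, btY a b n x t) := by
    intro t ht
    rw [huz]
    have hP1 := ((hasDerivAt_id t).const_mul (1 / 2)).mul_const (ν * x ^ 2 + z ^ 2)
    have hP2 := (hasDerivAt_pow 3 t).const_mul (ν / 6)
    have hP3 := (((hasDerivAt_id t).const_mul (b ^ 2)).sub
      ((hasDerivAt_pow 3 t).div_const 3)).const_mul (1 + ν)
    have hP4 := (hasDerivAt_id t).const_mul (a ^ 2 * ν / 3)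
    have hser := (hDY t ht).const_mul (4 * a ^ 3 * ν / π ^ 3)
    have h := (((((hP1.add hP2).add hP3).sub hP4).sub hser).const_mul (F / (E * I)))
    have h2 : HasDerivAt (fun w : ℝ => F / (E * I) * (1 / 2 * w * (ν * x ^ 2 + z ^ 2) +
        ν / 6 * w ^ 3 + (1 + ν) * (b ^ 2 * w - w ^ 3 / 3) - a ^ 2 * ν / 3 * w -
        4 * a ^ 3 * ν / π ^ 3 * SS x w))
        (F / (E * I) * (1 / 2 * (ν * x ^ 2 + z ^ 2) + ν / 2 * t ^ 2 +
          (1 + ν) * (b ^ 2 - t ^ 2) - a ^ 2 * ν / 3) -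
          F / (E * I) * (4 * a ^ 3 * ν / π ^ 3) * (∑' n, btY a b n x t)) t := by
      refine h.congr_deriv ?_; push_cast; ring
    exact h2.deriv
  -- second derivatives of uz
  have e1z : pd1 (pd1 uz) x y z = F / (E * I) * (ν * y) -
      F / (E * I) * (4 * a ^ 3 * ν / π ^ 3) * (∑' n, -(btYY a b n x y)) := by
    show deriv (fun t => pd1 uz t y z) x = _
    rw [funext fun t => hpd1uz t z]
    have h1 : HasDerivAt (fun t : ℝ => F / (E * I) * (ν * t * y))
        (F / (E * I) * (ν * y)) x := by
      have h0 := (((hasDerivAt_id x).const_mul ν).mul_const y).const_mul (F / (E * I))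
      refine h0.congr_deriv ?_; ring
    have h2 := (hDXX x).const_mul (F / (E * I) * (4 * a ^ 3 * ν / π ^ 3))
    exact (h1.sub h2).deriv
  have e2z : pd2 (pd2 uz) x y z = F / (E * I) * (ν * y - 2 * (1 + ν) * y) -
      F / (E * I) * (4 * a ^ 3 * ν / π ^ 3) * (∑' n, btYY a b n x y) := by
    show deriv (fun t => pd2 uz x t z) y = _
    have hnb : Set.Ioo (-b) b ∈ nhds y := isOpen_Ioo.mem_nhds ⟨hy1, hy2⟩
    have hev : (fun t => pd2 uz x t z) =ᶠ[nhds y]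
        (fun t => F / (E * I) * (1 / 2 * (ν * x ^ 2 + z ^ 2) + ν / 2 * t ^ 2 +
          (1 + ν) * (b ^ 2 - t ^ 2) - a ^ 2 * ν / 3) -
          F / (E * I) * (4 * a ^ 3 * ν / π ^ 3) * (∑' n, btY a b n x t)) := by
      filter_upwards [hnb] with t ht
      exact hpd2uz t (abs_lt.mpr ⟨ht.1, ht.2⟩)
    rw [hev.deriv_eq]
    have hA := ((hasDerivAt_pow 2 y).const_mul (ν / 2)).const_add
      (1 / 2 * (ν * x ^ 2 + z ^ 2))
    have hB := ((hasDerivAt_pow 2 y).const_sub (b ^ 2)).const_mul (1 + ν)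
    have hpoly := ((hA.add hB).sub_const (a ^ 2 * ν / 3)).const_mul (F / (E * I))
    have hser := hDYY.const_mul (F / (E * I) * (4 * a ^ 3 * ν / π ^ 3))
    have h := hpoly.sub hser
    have h2 : HasDerivAt (fun t : ℝ => F / (E * I) * (1 / 2 * (ν * x ^ 2 + z ^ 2) +
        ν / 2 * t ^ 2 + (1 + ν) * (b ^ 2 - t ^ 2) - a ^ 2 * ν / 3) -
        F / (E * I) * (4 * a ^ 3 * ν / π ^ 3) * (∑' n, btY a b n x t))
        (F / (E * I) * (ν * y - 2 * (1 + ν) * y) -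
          F / (E * I) * (4 * a ^ 3 * ν / π ^ 3) * (∑' n, btYY a b n x y)) y := by
      refine h.congr_deriv ?_; push_cast; ring
    exact h2.deriv
  have e3z : pd3 (pd3 uz) x y z = F / (E * I) * y := by
    show deriv (fun t => pd3 uz x y t) z = _
    rw [funext fun t => hpd3uz x y t]
    have h : HasDerivAt (fun t : ℝ => F / (E * I) * (y * t)) (F / (E * I) * y) z := by
      have h0 := ((hasDerivAt_id z).const_mul y).const_mul (F / (E * I))
      refine h0.congr_deriv ?_; ring
    exact h.deriv
  have e_lapuz : lap3 uz x y z = -(F / (E * I)) * y := by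
    show pd1 (pd1 uz) x y z + pd2 (pd2 uz) x y z + pd3 (pd3 uz) x y z = _
    rw [e1z, e2z, e3z, tsum_neg]
    ring
  ----------------------------------------------------------------
  -- divergence
  have hdiv : ∀ X Y Z : ℝ, div3 ux uy uz X Y Z = F / (E * I) * (1 - 2 * ν) * (Y * Z) := by
    intro X Y Z
    show pd1 ux X Y Z + pd2 uy X Y Z + pd3 uz X Y Z = _
    rw [hpd1ux, hpd2uy, hpd3uz]
    ring
  have hpd1div : pd1 (div3 ux uy uz) x y z = 0 := by
    show deriv (fun t => div3 ux uy uz t y z) x = 0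
    rw [funext fun t => hdiv t y z, deriv_const]
  have hpd2div : pd2 (div3 ux uy uz) x y z = F / (E * I) * (1 - 2 * ν) * z := by
    show deriv (fun t => div3 ux uy uz x t z) y = _
    rw [funext fun t => hdiv x t z]
    have h : HasDerivAt (fun t : ℝ => F / (E * I) * (1 - 2 * ν) * (t * z))
        (F / (E * I) * (1 - 2 * ν) * z) y := by
      have h0 := ((hasDerivAt_id y).mul_const z).const_mul (F / (E * I) * (1 - 2 * ν))
      refine h0.congr_deriv ?_; ring
    exact h.deriv
  have hpd3div : pd3 (div3 ux uy uz) x y z = F / (E * I) * (1 - 2 * ν) * y := by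
    show deriv (fun t => div3 ux uy uz x y t) z = _
    rw [funext fun t => hdiv x y t]
    have h : HasDerivAt (fun t : ℝ => F / (E * I) * (1 - 2 * ν) * (y * t))
        (F / (E * I) * (1 - 2 * ν) * y) z := by
      have h0 := ((hasDerivAt_id z).const_mul y).const_mul (F / (E * I) * (1 - 2 * ν))
      refine h0.congr_deriv ?_; ring
    exact h.deriv
  ----------------------------------------------------------------
  refine ⟨?_, ?_, ?_⟩
  · rw [e_lapux, hpd1div]; ring
  · rw [e_lapuy, hpd2div]
    linear_combination (F / (E * I) * z) * hlamG
  · rw [e_lapuz, hpd3div]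
    linear_combination (F / (E * I) * y) * hlamG
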